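/- There exists a constant C > 0 such that for all geodesic rays ξ = (u_n)_{n≥0} and η = (v_n)_{n≥0} of the induced augmented tree of a Moran set, |Φ(ξ) − Φ(η)| ≤ C·r^{t(ξ,η)}, where t(ξ,η) = liminf_n ⟨u_n, v_n⟩ (with the convention r^∞ = 0). -/

import Mathlib

open Metric Set Filter

attribute [local instance] Classical.propDecidable

noncomputable section

namespace MoranPaper

/-- Points of `ℝ^d`. -/
abbrev Pt (d : ℕ) := EuclideanSpace ℝ (Fin d)

/-- `w` is an admissible word: the letter at (0-indexed) position `j`
(corresponding to step `j+1`) lies in `[1, n j]`, where `n j` encodes `n_{j+1}`. -/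
def IsWord (n : ℕ → ℕ) (w : List ℕ) : Prop :=
  ∀ j (h : j < w.length), 1 ≤ w.get ⟨j, h⟩ ∧ w.get ⟨j, h⟩ ≤ n j

/-- The set `D_k` of words of length `k`. -/
def WordsLen (n : ℕ → ℕ) (k : ℕ) : Set (List ℕ) := {w | IsWord n w ∧ w.length = k}

/-- A Moran structure on the data `(J, (n_k), (r_k))`:  a family of sets `J_w`
indexed by words, with `J_∅ = J`, each `J_w` a similar copy of `J`, children
contained in the parent with pairwise disjoint interiors, and prescribed
diameter ratios. -/
structure MoranStructure (d : ℕ) (J : Set (Pt d)) (n : ℕ → ℕ) (r : ℕ → ℝ) where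
  Jset : List ℕ → Set (Pt d)
  root_eq : Jset [] = J
  similar : ∀ w, IsWord n w → ∃ (S : Pt d → Pt d) (c : ℝ), 0 < c ∧
      (∀ x y, dist (S x) (S y) = c * dist x y) ∧ Jset w = S '' J
  nested : ∀ w, IsWord n w → ∀ a, 1 ≤ a → a ≤ n w.length →
      Jset (w ++ [a]) ⊆ Jset w
  disjoint_int : ∀ w, IsWord n w → ∀ a b, 1 ≤ a → a ≤ n w.length →
      1 ≤ b → b ≤ n w.length → a ≠ b →
      interior (Jset (w ++ [a])) ∩ interior (Jset (w ++ [b])) = ∅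
  diam_ratio : ∀ w, IsWord n w → ∀ a, 1 ≤ a → a ≤ n w.length →
      Metric.diam (Jset (w ++ [a])) = r w.length * Metric.diam (Jset w)

/-- Standing hypotheses on the Moran data; `R` plays the role of `r = inf_k r_k > 0`. -/
structure MoranData (d : ℕ) (J : Set (Pt d)) (n : ℕ → ℕ) (r : ℕ → ℝ) (R : ℝ) : Prop where
  dim_pos : 1 ≤ d
  compact : IsCompact J
  int_nonempty : (interior J).Nonempty
  two_le : ∀ k, 2 ≤ n k
  r_pos : ∀ k, 0 < r k
  r_lt_one : ∀ k, r k < 1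
  nr_le : ∀ k, (n k : ℝ) * r k ≤ 1
  R_pos : 0 < R
  R_inf : R = ⨅ k, r k

/-- The Moran set `E = ⋂_k ⋃_{w ∈ D_k} J_w`. -/
def MoranSet {d : ℕ} {J : Set (Pt d)} {n : ℕ → ℕ} {r : ℕ → ℝ}
    (M : MoranStructure d J n r) : Set (Pt d) :=
  ⋂ k, ⋃ w ∈ WordsLen n k, M.Jset w

/-- The product `r_1 ⋯ r_k`. -/
def prodR (r : ℕ → ℝ) (k : ℕ) : ℝ := ∏ j ∈ Finset.range k, r j

/-- The level `X_m`:  `X_0 = {∅}`, and for `m ≥ 1`,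
`X_m = {w : r_1⋯r_k ≤ R^m < r_1⋯r_{k-1}}` where `k` is the length of `w`. -/
def XLevel (n : ℕ → ℕ) (r : ℕ → ℝ) (R : ℝ) (m : ℕ) : Set (List ℕ) :=
  if m = 0 then {([] : List ℕ)}
  else {w | IsWord n w ∧ prodR r w.length ≤ R ^ m ∧ R ^ m < prodR r (w.length - 1)}

/-- The vertex set `X = ⋃_m X_m`. -/
def XV (n : ℕ → ℕ) (r : ℕ → ℝ) (R : ℝ) : Set (List ℕ) := ⋃ m, XLevel n r R m

/-- `v` is the parent (first ancestor) of `u`:  `v` is the initial segment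
of `u` lying one level above `u`. -/
def IsParent (n : ℕ → ℕ) (r : ℕ → ℝ) (R : ℝ) (v u : List ℕ) : Prop :=
  v ≠ u ∧ v <+: u ∧ ∃ m, 1 ≤ m ∧ u ∈ XLevel n r R m ∧ v ∈ XLevel n r R (m - 1)

/-- Vertical edge relation `𝔈_v` (as an unordered relation). -/
def Evert (n : ℕ → ℕ) (r : ℕ → ℝ) (R : ℝ) (u v : List ℕ) : Prop :=
  IsParent n r R u v ∨ IsParent n r R v u

variable {d : ℕ} {J : Set (Pt d)} {n : ℕ → ℕ} {r : ℕ → ℝ}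

/-- Horizontal edge relation `𝔈_h`: distinct words on a common level `X_m`, `m ≥ 1`,
whose Moran pieces intersect. -/
def Ehor (M : MoranStructure d J n r) (R : ℝ) (u v : List ℕ) : Prop :=
  u ≠ v ∧ ∃ m, 1 ≤ m ∧ u ∈ XLevel n r R m ∧ v ∈ XLevel n r R m ∧
    (M.Jset u ∩ M.Jset v).Nonempty

/-- The induced augmented tree `(X, 𝔈)`, `𝔈 = 𝔈_v ∪ 𝔈_h`, as a graph on all words
(words outside `X` are isolated vertices). -/
def AugGraph (M : MoranStructure d J n r) (R : ℝ) : SimpleGraph (List ℕ) where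
  Adj u v := Evert n r R u v ∨ Ehor M R u v
  symm := ⟨by
    rintro u v (h | ⟨hne, m, hm, hu, hv, hJ⟩)
    · exact Or.inl h.symm
    · exact Or.inr ⟨hne.symm, m, hm, hv, hu, by rwa [Set.inter_comm]⟩⟩
  loopless := ⟨by
    rintro u ((⟨h, -⟩ | ⟨h, -⟩) | ⟨h, -⟩) <;> exact h rfl⟩

/-- The tree `(X, 𝔈_v)` with only the vertical edges. -/
def TreeGraph (n : ℕ → ℕ) (r : ℕ → ℝ) (R : ℝ) : SimpleGraph (List ℕ) where
  Adj u v := Evert n r R u v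
  symm := ⟨fun _ _ h => h.symm⟩
  loopless := ⟨by rintro u (⟨h, -⟩ | ⟨h, -⟩) <;> exact h rfl⟩

/-- The graph `(X, 𝔈_h)` with only the horizontal edges. -/
def HorGraph (M : MoranStructure d J n r) (R : ℝ) : SimpleGraph (List ℕ) where
  Adj u v := Ehor M R u v
  symm := ⟨by
    rintro u v ⟨hne, m, hm, hu, hv, hJ⟩
    exact ⟨hne.symm, m, hm, hv, hu, by rwa [Set.inter_comm]⟩⟩
  loopless := ⟨by rintro u ⟨h, -⟩; exact h rfl⟩

/-- Gromov product `⟨x,y⟩ = (d(o,x) + d(o,y) - d(x,y))/2` with respect to a base point `o`. -/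
def gromovD {V : Type*} (G : SimpleGraph V) (o x y : V) : ℝ :=
  ((G.dist o x : ℝ) + (G.dist o y : ℝ) - (G.dist x y : ℝ)) / 2

/-- Condition (H): there is `C' > 0` such that on every level `X_m` (`m ≥ 1`),
two pieces either intersect or are at distance at least `C' R^m`. -/
def CondH (M : MoranStructure d J n r) (R : ℝ) : Prop :=
  ∃ C' : ℝ, 0 < C' ∧ ∀ m, 1 ≤ m → ∀ u ∈ XLevel n r R m, ∀ v ∈ XLevel n r R m,
    (M.Jset u ∩ M.Jset v).Nonempty ∨
    ∀ p ∈ M.Jset u, ∀ q ∈ M.Jset v, C' * R ^ m ≤ dist p q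

/-- `T` is a horizontal connected component: a maximal subset of some level `X_m`
which is connected in the horizontal graph. -/
def IsHCC (M : MoranStructure d J n r) (R : ℝ) (T : Set (List ℕ)) : Prop :=
  ∃ m, T ⊆ XLevel n r R m ∧ ((HorGraph M R).induce T).Connected ∧
    ∀ T', T ⊆ T' → T' ⊆ XLevel n r R m → ((HorGraph M R).induce T').Connected → T' = T

/-- The common suffix set `Σ_m` of the level `X_m`: words `w` with `uw ∈ X_{m+1}`
for (some, equivalently all) `u ∈ X_m`. -/
def SigmaSet (n : ℕ → ℕ) (r : ℕ → ℝ) (R : ℝ) (m : ℕ) : Set (List ℕ) :=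
  {w | ∃ u ∈ XLevel n r R m, u ++ w ∈ XLevel n r R (m + 1)}

/-- The offspring set `TΣ_m ⊆ X_{m+1}` of a set `T ⊆ X_m`. -/
def TSigma (n : ℕ → ℕ) (r : ℕ → ℝ) (R : ℝ) (m : ℕ) (T : Set (List ℕ)) : Set (List ℕ) :=
  {x | ∃ u ∈ T, ∃ w ∈ SigmaSet n r R m, x = u ++ w}

/-- The augmented tree is rearrangeable:  horizontal connected components have
uniformly bounded cardinality, and for every horizontal connected component `T ⊆ X_m`
with `#T = b`, the offspring set `TΣ_m` can be partitioned into `b` groups (indexed by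
the elements of `T`), each group being a union of horizontal connected components and
having exactly `#Σ_m` elements. -/
def Rearrangeable (M : MoranStructure d J n r) (R : ℝ) : Prop :=
  (∃ L : ℕ, ∀ T, IsHCC M R T → T.Finite ∧ T.ncard ≤ L) ∧
  ∀ m T, T ⊆ XLevel n r R m → IsHCC M R T →
    ∃ g : List ℕ → List ℕ,
      (∀ x ∈ TSigma n r R m T, g x ∈ T) ∧
      (∀ Z, IsHCC M R Z → Z ⊆ TSigma n r R m T → ∀ x ∈ Z, ∀ y ∈ Z, g x = g y) ∧
      (∀ i ∈ T, {x ∈ TSigma n r R m T | g x = i}.ncard = (SigmaSet n r R m).ncard)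

/-- `C` is a (topological) connected component of `A`. -/
def IsRelCC {α : Type*} [TopologicalSpace α] (C A : Set α) : Prop :=
  ∃ x ∈ A, C = connectedComponentIn A x

/-- Condition (v): there is `L` such that any `T ⊆ D_{k-1}` for which `⋃_{i∈T} J_i`
is a connected component of `⋃_{i∈D_{k-1}} J_i` satisfies `#T ≤ L`. -/
def CondV (M : MoranStructure d J n r) : Prop :=
  ∃ L : ℕ, ∀ k, 1 ≤ k → ∀ T ⊆ WordsLen n (k - 1),
    IsRelCC (⋃ i ∈ T, M.Jset i) (⋃ i ∈ WordsLen n (k - 1), M.Jset i) →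
    T.Finite ∧ T.ncard ≤ L

/-- Condition (vi): for any such `T` (with `#T = b`), the connected components of
`⋃_{i∈T} ⋃_{j=1}^{n_k} J_{ij}` can be partitioned into `b` groups (indexed by the
elements of `T`) so that the union of the components in each group is a union of
exactly `n_k` of the sets `J_{ij}`. -/
def CondVI (M : MoranStructure d J n r) : Prop :=
  ∀ k, 1 ≤ k → ∀ T ⊆ WordsLen n (k - 1),
    IsRelCC (⋃ i ∈ T, M.Jset i) (⋃ i ∈ WordsLen n (k - 1), M.Jset i) →
    ∃ f : Set (Pt d) → List ℕ,
      (∀ C, IsRelCC C (⋃ u ∈ T, ⋃ j ∈ Set.Icc 1 (n (k - 1)), M.Jset (u ++ [j])) → f C ∈ T) ∧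
      ∀ i ∈ T, ∃ W : Finset (List ℕ × ℕ),
        (∀ p ∈ W, p.1 ∈ T ∧ 1 ≤ p.2 ∧ p.2 ≤ n (k - 1)) ∧
        W.card = n (k - 1) ∧
        (⋃ C ∈ {C | IsRelCC C (⋃ u ∈ T, ⋃ j ∈ Set.Icc 1 (n (k - 1)), M.Jset (u ++ [j]))
            ∧ f C = i}, C)
          = ⋃ p ∈ W, M.Jset (p.1 ++ [p.2])

/-- A geodesic ray of the induced augmented tree: `u_m ∈ X_m` and `u_m = (u_{m+1})⁻¹`. -/
def IsRay (n : ℕ → ℕ) (r : ℕ → ℝ) (R : ℝ) (u : ℕ → List ℕ) : Prop :=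
  (∀ m, u m ∈ XLevel n r R m) ∧ ∀ m, IsParent n r R (u m) (u (m + 1))

/-- Geodesic rays as a type. -/
def MRay (n : ℕ → ℕ) (r : ℕ → ℝ) (R : ℝ) := {u : ℕ → List ℕ // IsRay n r R u}

/-- `t(ξ,η) = liminf_m ⟨u_m, v_m⟩`, valued in `EReal`. -/
def tLim {V : Type*} (G : SimpleGraph V) (o : V) (u v : ℕ → V) : EReal :=
  Filter.liminf (fun m => ((gromovD G o (u m) (v m) : ℝ) : EReal)) Filter.atTop

/-- `R ^ t` for `t ∈ EReal`, with the convention `R ^ ∞ = 0`. -/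
def rpowE (R : ℝ) (t : EReal) : ℝ := if t = ⊤ then 0 else R ^ t.toReal

/-- The hyperbolic boundary of the induced augmented tree: equivalence classes of
geodesic rays, two rays being equivalent when `t(ξ,η) = ∞`. -/
def MBoundary (M : MoranStructure d J n r) (R : ℝ) :=
  Quot (fun ξ η : MRay n r R => tLim (AugGraph M R) [] ξ.1 η.1 = ⊤)

/-- The class of a ray in the hyperbolic boundary. -/
def mkB (M : MoranStructure d J n r) (R : ℝ) (ξ : MRay n r R) : MBoundary M R :=
  Quot.mk _ ξ

/-- The metric `ρ_a` on the hyperbolic boundary: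
`ρ_a(ξ̄,η̄) = exp(-a · inf{t(ξ,η) : ξ ∈ ξ̄, η ∈ η̄})` for distinct classes, and `0` otherwise. -/
def mrho (M : MoranStructure d J n r) (R a : ℝ) (p q : MBoundary M R) : ℝ :=
  if p = q then 0
  else Real.exp (-a * (sInf {s : EReal | ∃ ξ η : MRay n r R,
    mkB M R ξ = p ∧ mkB M R η = q ∧ s = tLim (AugGraph M R) [] ξ.1 η.1}).toReal)

/-- An abstract augmented tree in the sense of Kaimanovich: a rooted tree (encoded
by a parent map and a level function) together with a symmetric horizontal edge
relation `Eh` joining distinct vertices of a common level whose parents are equal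
or horizontally joined. -/
structure AugmentedTree (V : Type*) where
  root : V
  parent : V → V
  lvl : V → ℕ
  lvl_root : lvl root = 0
  lvl_parent : ∀ x, x ≠ root → lvl (parent x) + 1 = lvl x
  Eh : V → V → Prop
  Eh_symm : ∀ x y, Eh x y → Eh y x
  Eh_ne : ∀ x y, Eh x y → x ≠ y
  Eh_lvl : ∀ x y, Eh x y → lvl x = lvl y
  Eh_parent : ∀ x y, Eh x y → parent x = parent y ∨ Eh (parent x) (parent y)

namespace AugmentedTree

variable {V : Type*} (T : AugmentedTree V)

/-- The vertical (tree) edge relation. -/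
def Ev (x y : V) : Prop :=
  (x ≠ T.root ∧ T.parent x = y) ∨ (y ≠ T.root ∧ T.parent y = x)

/-- The graph `(X, 𝔈)`, `𝔈 = 𝔈_v ∪ 𝔈_h`. -/
def graph : SimpleGraph V where
  Adj x y := x ≠ y ∧ (T.Ev x y ∨ T.Eh x y)
  symm := ⟨by
    rintro x y ⟨hne, h | h⟩
    · exact ⟨hne.symm, Or.inl h.symm⟩
    · exact ⟨hne.symm, Or.inr (T.Eh_symm x y h)⟩⟩
  loopless := ⟨fun _ h => h.1 rfl⟩

/-- Gromov product `⟨x,y⟩ = (|x| + |y| - d(x,y))/2` (one has `d(o,x) = |x| = lvl x`). -/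
def gromov (x y : V) : ℝ :=
  ((T.lvl x : ℝ) + (T.lvl y : ℝ) - (T.graph.dist x y : ℝ)) / 2

/-- Gromov hyperbolicity. -/
def Hyperbolic : Prop :=
  ∃ δ : ℝ, 0 ≤ δ ∧ ∀ x y z : V,
    min (T.gromov x z) (T.gromov z y) - δ ≤ T.gromov x y

/-- A geodesic ray from the root: `x_0 = o` and `x_m = (x_{m+1})⁻¹`. -/
def IsRayT (x : ℕ → V) : Prop := x 0 = T.root ∧ ∀ m, T.parent (x (m + 1)) = x m

/-- Geodesic rays from the root, as a type. -/
def Ray := {x : ℕ → V // T.IsRayT x}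

/-- `t(ξ,η) = liminf_m ⟨x_m, y_m⟩`, valued in `EReal`. -/
def tvalT (ξ η : T.Ray) : EReal :=
  Filter.liminf (fun m => ((T.gromov (ξ.1 m) (η.1 m) : ℝ) : EReal)) Filter.atTop

/-- The hyperbolic boundary: classes of geodesic rays, two rays being equivalent
when `t(ξ,η) = ∞`. -/
def Boundary := Quot (fun ξ η : T.Ray => T.tvalT ξ η = ⊤)

/-- The class of a ray in the boundary. -/
def mkBd (ξ : T.Ray) : T.Boundary := Quot.mk _ ξ

/-- The metric `ρ_a` on the hyperbolic boundary. -/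
def rho (a : ℝ) (p q : T.Boundary) : ℝ :=
  if p = q then 0
  else Real.exp (-a * (sInf {s : EReal | ∃ ξ η : T.Ray,
    T.mkBd ξ = p ∧ T.mkBd η = q ∧ s = T.tvalT ξ η}).toReal)

end AugmentedTree

end MoranPaper

end


noncomputable section Statement8Aux

namespace MoranPaper

variable {d : ℕ} {J : Set (Pt d)} {n : ℕ → ℕ} {r : ℕ → ℝ} {R : ℝ}

lemma MoranData.R_le_r (hD : MoranData d J n r R) (k : ℕ) : R ≤ r k := by
  rw [hD.R_inf]
  exact ciInf_le ⟨0, by rintro x ⟨j, rfl⟩; exact (hD.r_pos j).le⟩ k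

lemma MoranData.R_le_half (hD : MoranData d J n r R) : R ≤ 1/2 := by
  have h1 := hD.R_le_r 0
  have h2 := hD.nr_le 0
  have h3 : (2:ℝ) ≤ n 0 := by exact_mod_cast hD.two_le 0
  have h5 := hD.r_pos 0
  nlinarith

lemma MoranData.R_lt_one (hD : MoranData d J n r R) : R < 1 :=
  lt_of_le_of_lt hD.R_le_half (by norm_num)

lemma prodR_succ (r : ℕ → ℝ) (k : ℕ) : prodR r (k+1) = prodR r k * r k :=
  Finset.prod_range_succ r k

lemma prodR_pos (hD : MoranData d J n r R) (k : ℕ) : 0 < prodR r k :=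
  Finset.prod_pos (fun j _ => hD.r_pos j)

lemma mem_xlevel_zero {w : List ℕ} : w ∈ XLevel n r R 0 ↔ w = [] := by
  simp [XLevel]

lemma isWord_of_mem_xlevel {w : List ℕ} {m : ℕ} (hw : w ∈ XLevel n r R m) : IsWord n w := by
  by_cases hm : m = 0
  · subst hm; rw [mem_xlevel_zero] at hw; subst hw
    intro j hj; simp at hj
  · rw [XLevel, if_neg hm] at hw; exact hw.1

lemma length_pos_of_mem_xlevel (hD : MoranData d J n r R) {w : List ℕ} {m : ℕ}
    (hm : m ≠ 0) (hw : w ∈ XLevel n r R m) : 1 ≤ w.length := by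
  rw [XLevel, if_neg hm] at hw
  by_contra h
  have hw0 : w.length = 0 := by omega
  simp only [Set.mem_setOf_eq, hw0] at hw
  have h1 : prodR r 0 = 1 := Finset.prod_range_zero r
  have h2 : R ^ m < 1 := pow_lt_one₀ hD.R_pos.le hD.R_lt_one hm
  rw [h1] at hw
  linarith [hw.2.1]

lemma xlevel_unique (hD : MoranData d J n r R) {w : List ℕ} {m₁ m₂ : ℕ}
    (h₁ : w ∈ XLevel n r R m₁) (h₂ : w ∈ XLevel n r R m₂) : m₁ = m₂ := by
  have key : ∀ m m', m < m' → w ∈ XLevel n r R m → w ∈ XLevel n r R m' → False := by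
    intro m m' hlt hm hm'
    by_cases h0 : m = 0
    · subst h0
      rw [mem_xlevel_zero] at hm; subst hm
      have hl := length_pos_of_mem_xlevel hD (by omega) hm'
      simp at hl
    · have hlen := length_pos_of_mem_xlevel hD h0 hm
      rw [XLevel, if_neg h0] at hm
      rw [XLevel, if_neg (by omega : m' ≠ 0)] at hm'
      obtain ⟨-, hm1, hm2⟩ := hm
      obtain ⟨-, hm1', hm2'⟩ := hm'
      set k := w.length with hk
      have hprod : prodR r k = prodR r (k-1) * r (k-1) := by
        conv_lhs => rw [show k = (k-1) + 1 by omega]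
        rw [prodR_succ]
      have h5 : R ^ m' ≤ R ^ (m+1) :=
        pow_le_pow_of_le_one hD.R_pos.le hD.R_lt_one.le (by omega)
      have h6 : R ^ (m+1) = R ^ m * R := pow_succ R m
      have h7 : R ^ m * R < prodR r (k-1) * r (k-1) := by
        have hr1 := hD.R_le_r (k-1)
        have hr2 := hD.r_pos (k-1)
        have hp := pow_pos hD.R_pos m
        nlinarith
      rw [← hprod] at h7
      linarith
  rcases lt_trichotomy m₁ m₂ with h|h|h
  · exact absurd (key m₁ m₂ h h₁ h₂) not_false
  · exact h
  · exact absurd (key m₂ m₁ h h₂ h₁) not_false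

lemma level_of_adj (hD : MoranData d J n r R) (M : MoranStructure d J n r) {a c : List ℕ}
    {ma : ℕ} (ha : a ∈ XLevel n r R ma) (h : (AugGraph M R).Adj a c) :
    ∃ mc, c ∈ XLevel n r R mc ∧ (mc = ma ∨ mc + 1 = ma ∨ ma + 1 = mc) := by
  have h' : Evert n r R a c ∨ Ehor M R a c := h
  rcases h' with (⟨hne, hpre, m, hm, hcm, ham⟩ | ⟨hne, hpre, m, hm, ham, hcm⟩) |
    ⟨hne, m, hm, ham, hcm, hJ⟩
  · have : ma = m - 1 := xlevel_unique hD ha ham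
    exact ⟨m, hcm, by omega⟩
  · have : ma = m := xlevel_unique hD ha ham
    exact ⟨m - 1, hcm, by omega⟩
  · have : ma = m := xlevel_unique hD ha ham
    exact ⟨m, hcm, by omega⟩

lemma level_drift (hD : MoranData d J n r R) (M : MoranStructure d J n r) :
    ∀ {a b : List ℕ} (p : (AugGraph M R).Walk a b) (ma mb : ℕ),
      a ∈ XLevel n r R ma → b ∈ XLevel n r R mb → mb ≤ ma + p.length := by
  intro a b p
  induction p with
  | nil =>
    intro ma mb ha hb
    have := xlevel_unique hD ha hb
    simp [this]
  | @cons a c b h q ih =>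
    intro ma mb ha hb
    obtain ⟨mc, hc, hcase⟩ := level_of_adj hD M ha h
    have h2 := ih mc mb hc hb
    simp only [SimpleGraph.Walk.length_cons]
    omega

lemma isWord_concat {w : List ℕ} {a : ℕ} (h : IsWord n (w ++ [a])) :
    IsWord n w ∧ 1 ≤ a ∧ a ≤ n w.length := by
  have hlen : (w ++ [a]).length = w.length + 1 := by simp
  refine ⟨fun j hj => ?_, ?_⟩
  · have hj' : j < (w ++ [a]).length := by omega
    have h2 := h j hj'
    simpa [List.get_eq_getElem, List.getElem_append_left hj] using h2
  · have hj' : w.length < (w ++ [a]).length := by omega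
    have h2 := h w.length hj'
    simpa [List.get_eq_getElem, List.getElem_concat_length] using h2

lemma jset_subset_of_prefix (M : MoranStructure d J n r) :
    ∀ (t v : List ℕ), IsWord n (v ++ t) → M.Jset (v ++ t) ⊆ M.Jset v := by
  intro t
  induction t using List.reverseRecOn with
  | nil => intro v h; simp
  | append_singleton t a ih =>
    intro v h
    rw [← List.append_assoc] at h ⊢
    obtain ⟨hw, ha1, ha2⟩ := isWord_concat h
    exact (M.nested _ hw a ha1 ha2).trans (ih v hw)

lemma jset_nonempty (hD : MoranData d J n r R) (M : MoranStructure d J n r)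
    {w : List ℕ} (h : IsWord n w) : (M.Jset w).Nonempty := by
  obtain ⟨S, c, hc, hdist, him⟩ := M.similar w h
  obtain ⟨z, hz⟩ := hD.int_nonempty
  exact him ▸ ⟨S z, Set.mem_image_of_mem S (interior_subset hz)⟩

lemma jset_bounded (hD : MoranData d J n r R) (M : MoranStructure d J n r)
    {w : List ℕ} (h : IsWord n w) : Bornology.IsBounded (M.Jset w) := by
  obtain ⟨S, c, hc, hdist, him⟩ := M.similar w h
  rw [him, Metric.isBounded_iff]
  obtain ⟨Cb, hCb⟩ := Metric.isBounded_iff.1 hD.compact.isBounded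
  refine ⟨c * Cb, ?_⟩
  rintro _ ⟨p, hp, rfl⟩ _ ⟨q, hq, rfl⟩
  rw [hdist]
  exact mul_le_mul_of_nonneg_left (hCb hp hq) hc.le

lemma diam_jset (M : MoranStructure d J n r) :
    ∀ {w : List ℕ}, IsWord n w → Metric.diam (M.Jset w) = prodR r w.length * Metric.diam J := by
  intro w
  induction w using List.reverseRecOn with
  | nil => intro _; simp [M.root_eq, prodR]
  | append_singleton t a ih =>
    intro h
    obtain ⟨hw, ha1, ha2⟩ := isWord_concat h
    rw [M.diam_ratio t hw a ha1 ha2, ih hw]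
    simp only [List.length_append, List.length_cons, List.length_nil, prodR_succ]
    ring

lemma diam_jset_le (hD : MoranData d J n r R) (M : MoranStructure d J n r)
    {w : List ℕ} {m : ℕ} (hw : w ∈ XLevel n r R m) :
    Metric.diam (M.Jset w) ≤ R ^ m * (Metric.diam J + 1) := by
  have hd : 0 ≤ Metric.diam J := Metric.diam_nonneg
  by_cases hm : m = 0
  · subst hm; rw [mem_xlevel_zero] at hw; subst hw
    simp only [M.root_eq, pow_zero, one_mul]
    linarith
  · have h := hw
    rw [XLevel, if_neg hm] at h
    obtain ⟨hword, h1, h2⟩ := h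
    rw [diam_jset M hword]
    have hp := pow_pos hD.R_pos m
    have hpr := prodR_pos hD w.length
    nlinarith

lemma adj_intersect (hD : MoranData d J n r R) (M : MoranStructure d J n r) {a c : List ℕ}
    (h : (AugGraph M R).Adj a c) : (M.Jset a ∩ M.Jset c).Nonempty := by
  have h' : Evert n r R a c ∨ Ehor M R a c := h
  rcases h' with (⟨hne, hpre, m, hm, hcm, ham⟩ | ⟨hne, hpre, m, hm, ham, hcm⟩) |
    ⟨hne, m, hm, _, _, hJ⟩
  · have hword : IsWord n c := isWord_of_mem_xlevel hcm
    obtain ⟨t, rfl⟩ := hpre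
    obtain ⟨z, hz⟩ := jset_nonempty hD M hword
    exact ⟨z, jset_subset_of_prefix M t a hword hz, hz⟩
  · have hword : IsWord n a := isWord_of_mem_xlevel ham
    obtain ⟨t, rfl⟩ := hpre
    obtain ⟨z, hz⟩ := jset_nonempty hD M hword
    exact ⟨z, hz, jset_subset_of_prefix M t c hword hz⟩
  · exact hJ

lemma walk_bound (hD : MoranData d J n r R) (M : MoranStructure d J n r) :
    ∀ {a b : List ℕ} (p : (AugGraph M R).Walk a b) (ma mb : ℕ),
      a ∈ XLevel n r R ma → b ∈ XLevel n r R mb →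
      ∀ x ∈ M.Jset a, ∀ y ∈ M.Jset b,
      dist x y ≤ (4 * ((Metric.diam J + 1) + (Metric.diam J + 1) * R / (1 - R)) /
            (1 - Real.sqrt R)) * Real.sqrt R ^ ((ma : ℤ) + (mb : ℤ) - (p.length : ℤ))
        - ((Metric.diam J + 1) * R / (1 - R)) * Real.sqrt R ^ (2 * (ma : ℤ)) := by
  have hR0 : 0 < R := hD.R_pos
  have hRh : R ≤ 1/2 := hD.R_le_half
  have h1R : 0 < 1 - R := by linarith
  generalize hD_def : Metric.diam J + 1 = D
  generalize hs_def : Real.sqrt R = s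
  generalize hK'_def : D * R / (1 - R) = K'
  generalize hK_def : 4 * (D + K') / (1 - s) = K
  have hs0 : 0 < s := hs_def ▸ Real.sqrt_pos.mpr hR0
  have hss : s * s = R := hs_def ▸ Real.mul_self_sqrt hR0.le
  have hs1 : s < 1 := by nlinarith [sq_nonneg (s - 1)]
  have hD1 : 1 ≤ D := by
    have h := Metric.diam_nonneg (s := J); rw [← hD_def]; linarith
  have h1s : 0 < 1 - s := by linarith
  have hK'0 : 0 ≤ K' := by
    rw [← hK'_def]; exact div_nonneg (by nlinarith) h1R.le
  have hK0 : 0 < K := by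
    rw [← hK_def]; exact div_pos (by nlinarith) h1s
  have hKK' : K * (1 - s) = 4 * (D + K') := by
    rw [← hK_def]; exact div_mul_cancel₀ _ h1s.ne'
  have hc1 : K' * (1 - R) = D * R := by
    rw [← hK'_def]; exact div_mul_cancel₀ _ h1R.ne'
  have hkey : (D + K') * R = K' := by nlinarith [hc1]
  have hRle_s : R ≤ s := by nlinarith
  have hzpos : ∀ i : ℤ, 0 < s ^ i := fun i => zpow_pos hs0 i
  have hzadd : ∀ i j : ℤ, s ^ (i + j) = s ^ i * s ^ j := fun i j => zpow_add₀ hs0.ne' i j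
  have hz1 : s ^ (1:ℤ) = s := zpow_one s
  have hz2 : s ^ (2:ℤ) = R := by
    rw [show (2:ℤ) = 1 + 1 by norm_num, hzadd, hz1, hss]
  have hnat : ∀ m : ℕ, s ^ (2 * (m:ℤ)) = R ^ m := by
    intro m
    rw [show 2 * (m:ℤ) = ((2*m : ℕ) : ℤ) by push_cast; ring, zpow_natCast, pow_mul, pow_two, hss]
  have hKD : D + K' ≤ K := by
    nlinarith [mul_nonneg hK0.le hs0.le]
  intro a0 b0 p
  induction p with
  | nil =>
    rename_i w
    intro ma mb ha hb x hx y hy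
    obtain rfl : ma = mb := xlevel_unique hD ha hb
    have hd1 : dist x y ≤ Metric.diam (M.Jset w) :=
      Metric.dist_le_diam_of_mem (jset_bounded hD M (isWord_of_mem_xlevel ha)) hx hy
    have hd2 := diam_jset_le hD M ha
    rw [hD_def] at hd2
    simp only [SimpleGraph.Walk.length_nil, Nat.cast_zero, sub_zero]
    rw [show (ma:ℤ) + (ma:ℤ) = 2 * (ma:ℤ) from by ring, hnat ma]
    have hp := pow_pos hR0 ma
    nlinarith [mul_nonneg (sub_nonneg.2 hKD) hp.le]
  | @cons a c b h q ih =>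
    intro ma mb ha hb x hx y hy
    obtain ⟨mc, hc, hcase⟩ := level_of_adj hD M ha h
    obtain ⟨z, hza, hzc⟩ := adj_intersect hD M h
    have hIH := ih mc mb hc hb z hzc y hy
    have hA0 : 0 < s ^ (2 * (ma:ℤ)) := hzpos _
    have hdxz : dist x z ≤ D * s ^ (2 * (ma:ℤ)) := by
      have h1 : dist x z ≤ Metric.diam (M.Jset a) :=
        Metric.dist_le_diam_of_mem (jset_bounded hD M (isWord_of_mem_xlevel ha)) hx hza
      have h2 := diam_jset_le hD M ha
      rw [hD_def] at h2
      rw [hnat ma]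
      linarith [mul_comm (R ^ ma) D]
    have htri : dist x y ≤ dist x z + dist z y := dist_triangle x z y
    have hdriftn := level_drift hD M q mc mb hc hb
    have hdrift : (mb:ℤ) ≤ (mc:ℤ) + (q.length:ℤ) := by exact_mod_cast hdriftn
    have hlen : ((SimpleGraph.Walk.cons h q).length : ℤ) = (q.length:ℤ) + 1 := by
      simp [SimpleGraph.Walk.length_cons]
    rw [hlen]
    set e : ℤ := (ma:ℤ) + (mb:ℤ) - ((q.length:ℤ) + 1) with he_def
    have hE0 : 0 < s ^ e := hzpos e
    rcases hcase with heq | hup | hdown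
    · -- mc = ma : horizontal step
      have h5e : (mc:ℤ) + (mb:ℤ) - (q.length:ℤ) = e + 1 := by rw [he_def]; omega
      have h6e : 2 * (mc:ℤ) = 2 * (ma:ℤ) := by omega
      rw [h5e, h6e, hzadd e 1, hz1] at hIH
      have hAe : s ^ (2 * (ma:ℤ)) ≤ s ^ e * s := by
        have h8 : s ^ (2 * (ma:ℤ)) ≤ s ^ (e + 1) :=
          zpow_le_zpow_right_of_le_one₀ hs0 hs1.le (by omega)
        rwa [hzadd e 1, hz1] at h8
      have h3 : (D + K) * s ≤ K := by
        have h9 : D * s ≤ D := by nlinarith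
        linarith [hKK', hK'0]
      have h10 : D * s ^ (2 * (ma:ℤ)) ≤ D * (s ^ e * s) :=
        mul_le_mul_of_nonneg_left hAe (by linarith)
      have h11 : (D + K) * s * s ^ e ≤ K * s ^ e :=
        mul_le_mul_of_nonneg_right h3 hE0.le
      linarith
    · -- mc + 1 = ma : step up
      have h5e : (mc:ℤ) + (mb:ℤ) - (q.length:ℤ) = e := by rw [he_def]; omega
      have h6e : 2 * (ma:ℤ) = 2 * (mc:ℤ) + 2 := by omega
      rw [h5e] at hIH
      have hArw : s ^ (2 * (ma:ℤ)) = s ^ (2 * (mc:ℤ)) * R := by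
        rw [h6e, hzadd, hz2]
      have h4 : (D + K') * s ^ (2 * (ma:ℤ)) = K' * s ^ (2 * (mc:ℤ)) := by
        rw [hArw]; linear_combination (s ^ (2 * (mc:ℤ))) * hkey
      linarith only [htri, hdxz, hIH, h4]
    · -- ma + 1 = mc : step down
      have h5e : (mc:ℤ) + (mb:ℤ) - (q.length:ℤ) = e + 2 := by rw [he_def]; omega
      have h6e : 2 * (mc:ℤ) = 2 * (ma:ℤ) + 2 := by omega
      rw [h5e, h6e, hzadd e 2, hzadd (2*(ma:ℤ)) 2, hz2] at hIH
      have hAe : s ^ (2 * (ma:ℤ)) ≤ s ^ e :=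
        zpow_le_zpow_right_of_le_one₀ hs0 hs1.le (by omega)
      have h5 : D + K' * (1 - R) ≤ K * (1 - R) := by
        have h12 : K * (1 - s) ≤ K * (1 - R) :=
          mul_le_mul_of_nonneg_left (by linarith) hK0.le
        have h13 : 0 ≤ K' * R := mul_nonneg hK'0 hR0.le
        linarith [hKK']
      have h6 : (D + K' * (1 - R)) * s ^ (2 * (ma:ℤ)) ≤ (K * (1 - R)) * s ^ (2 * (ma:ℤ)) :=
        mul_le_mul_of_nonneg_right h5 hA0.le
      have h7 : (K * (1 - R)) * s ^ (2 * (ma:ℤ)) ≤ (K * (1 - R)) * s ^ e :=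
        mul_le_mul_of_nonneg_left hAe (mul_pos hK0 h1R).le
      linarith only [htri, hdxz, hIH, h6, h7]

lemma ray_zero {u : ℕ → List ℕ} (hu : IsRay n r R u) : u 0 = [] := by
  have h := hu.1 0
  rwa [mem_xlevel_zero] at h

lemma exists_walk_from_root (M : MoranStructure d J n r) {u : ℕ → List ℕ}
    (hu : IsRay n r R u) (m : ℕ) :
    ∃ p : (AugGraph M R).Walk [] (u m), p.length = m := by
  induction m with
  | zero =>
    exact ⟨SimpleGraph.Walk.nil.copy rfl (ray_zero hu).symm, by simp⟩
  | succ m ih =>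
    obtain ⟨p, hp⟩ := ih
    have hadj : (AugGraph M R).Adj (u m) (u (m + 1)) := Or.inl (Or.inl (hu.2 m))
    exact ⟨p.concat hadj, by simp [SimpleGraph.Walk.length_concat, hp]⟩

lemma dist_root (hD : MoranData d J n r R) (M : MoranStructure d J n r) {u : ℕ → List ℕ}
    (hu : IsRay n r R u) (m : ℕ) : (AugGraph M R).dist [] (u m) = m := by
  obtain ⟨p, hp⟩ := exists_walk_from_root M hu m
  have h1 : (AugGraph M R).dist [] (u m) ≤ p.length := SimpleGraph.dist_le p
  have hreach : (AugGraph M R).Reachable [] (u m) := ⟨p⟩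
  obtain ⟨q, hq⟩ := hreach.exists_walk_length_eq_dist
  have h0 : ([] : List ℕ) ∈ XLevel n r R 0 := by rw [mem_xlevel_zero]
  have h2 : m ≤ 0 + q.length := level_drift hD M q 0 m h0 (hu.1 m)
  omega

end MoranPaper

end Statement8Aux

/-- there is `C > 0` such that `|Φ(ξ) - Φ(η)| ≤ C · r^{t(ξ,η)}` for all
geodesic rays `ξ, η`, where `t(ξ,η) = liminf_m ⟨u_m, v_m⟩` (with `r^∞ = 0`). -/
theorem MoranPaper.statement8 (d : ℕ) (J : Set (MoranPaper.Pt d)) (n : ℕ → ℕ) (r : ℕ → ℝ)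
    (R : ℝ) (hD : MoranPaper.MoranData d J n r R) (M : MoranPaper.MoranStructure d J n r) :
    ∃ C : ℝ, 0 < C ∧ ∀ u v : ℕ → List ℕ,
      MoranPaper.IsRay n r R u → MoranPaper.IsRay n r R v →
      ∀ x y : MoranPaper.Pt d,
        (⋂ m, M.Jset (u m)) = {x} → (⋂ m, M.Jset (v m)) = {y} →
        dist x y ≤ C * MoranPaper.rpowE R (MoranPaper.tLim (MoranPaper.AugGraph M R) [] u v) := by
  open MoranPaper in
  have hR0 : 0 < R := hD.R_pos
  have hRh : R ≤ 1/2 := hD.R_le_half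
  have hR1 : R < 1 := hD.R_lt_one
  have h1R : 0 < 1 - R := by linarith
  set s := Real.sqrt R with hs_def
  have hs0 : 0 < s := Real.sqrt_pos.mpr hR0
  have hss : s * s = R := Real.mul_self_sqrt hR0.le
  have hs1 : s < 1 := by nlinarith [sq_nonneg (s - 1)]
  set D := Metric.diam J + 1 with hD_def
  have hD1 : 1 ≤ D := by
    have h := Metric.diam_nonneg (s := J); rw [hD_def]; linarith
  set K' := D * R / (1 - R) with hK'_def
  set K := 4 * (D + K') / (1 - s) with hK_def
  have hK'0 : 0 ≤ K' := div_nonneg (by nlinarith) (by linarith)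
  have hK0 : 0 < K := div_pos (by nlinarith) (by linarith)
  refine ⟨K, hK0, ?_⟩
  intro u v hu hv x y hx hy
  set G := MoranPaper.AugGraph M R with hG_def
  have hzrp : ∀ k : ℤ, s ^ k = R ^ ((k : ℝ) / 2) := by
    intro k
    rw [show ((k : ℝ) / 2) = (1/2 : ℝ) * (k : ℝ) by ring, Real.rpow_mul hR0.le,
      ← Real.sqrt_eq_rpow, ← hs_def, Real.rpow_intCast]
  have key : ∀ m : ℕ, dist x y ≤ K * R ^ (MoranPaper.gromovD G [] (u m) (v m)) := by
    intro m
    have hxI : x ∈ ⋂ k, M.Jset (u k) := by rw [hx]; exact rfl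
    have hyI : y ∈ ⋂ k, M.Jset (v k) := by rw [hy]; exact rfl
    have hx' : x ∈ M.Jset (u m) := Set.mem_iInter.mp hxI m
    have hy' : y ∈ M.Jset (v m) := Set.mem_iInter.mp hyI m
    obtain ⟨pu, hpu⟩ := MoranPaper.exists_walk_from_root M hu m
    obtain ⟨pv, hpv⟩ := MoranPaper.exists_walk_from_root M hv m
    have hreach : G.Reachable (u m) (v m) := (SimpleGraph.Reachable.symm ⟨pu⟩).trans ⟨pv⟩
    obtain ⟨p, hp⟩ := hreach.exists_walk_length_eq_dist
    have hwb := MoranPaper.walk_bound hD M p m m (hu.1 m) (hv.1 m) x hx' y hy'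
    rw [← hD_def, ← hs_def, ← hK'_def, ← hK_def] at hwb
    have hgrom : MoranPaper.gromovD G [] (u m) (v m)
        = (((m:ℤ) + (m:ℤ) - (p.length:ℤ) : ℤ) : ℝ) / 2 := by
      have hdu : G.dist [] (u m) = m := MoranPaper.dist_root hD M hu m
      have hdv : G.dist [] (v m) = m := MoranPaper.dist_root hD M hv m
      simp only [MoranPaper.gromovD, MoranPaper.dist_root hD M hu m,
        MoranPaper.dist_root hD M hv m, ← hp, hdu, hdv]
      push_cast
      ring
    have hsub : 0 ≤ K' * s ^ (2 * (m:ℤ)) := mul_nonneg hK'0 (zpow_pos hs0 _).le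
    calc dist x y ≤ K * s ^ ((m:ℤ) + (m:ℤ) - (p.length:ℤ)) - K' * s ^ (2 * (m:ℤ)) := hwb
      _ ≤ K * s ^ ((m:ℤ) + (m:ℤ) - (p.length:ℤ)) := by linarith
      _ = K * R ^ (MoranPaper.gromovD G [] (u m) (v m)) := by rw [hzrp, hgrom]
  set t := MoranPaper.tLim G [] u v with ht_def
  by_cases ht : t = ⊤
  · simp only [MoranPaper.rpowE, if_pos ht, mul_zero]
    have hj : ∀ j : ℕ, dist x y ≤ K * R ^ j := by
      intro j
      have hlt : ((j:ℝ) : EReal) < Filter.liminf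
          (fun m => ((MoranPaper.gromovD G [] (u m) (v m) : ℝ) : EReal)) Filter.atTop := by
        have h2 : ((j:ℝ) : EReal) < t := by rw [ht]; exact EReal.coe_lt_top _
        exact h2
      obtain ⟨m, hm⟩ := (Filter.eventually_lt_of_lt_liminf hlt).exists
      have hm' : (j : ℝ) ≤ MoranPaper.gromovD G [] (u m) (v m) := by exact_mod_cast hm.le
      calc dist x y ≤ K * R ^ (MoranPaper.gromovD G [] (u m) (v m)) := key m
        _ ≤ K * R ^ ((j:ℝ)) := mul_le_mul_of_nonneg_left
            (Real.rpow_le_rpow_of_exponent_ge hR0 hR1.le hm') hK0.le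
        _ = K * R ^ j := by rw [Real.rpow_natCast]
    have htend : Filter.Tendsto (fun j : ℕ => K * R ^ j) Filter.atTop (nhds 0) := by
      have h3 := tendsto_pow_atTop_nhds_zero_of_lt_one hR0.le hR1
      simpa using h3.const_mul K
    exact ge_of_tendsto' htend hj
  · simp only [MoranPaper.rpowE, if_neg ht]
    have hge : ∀ ε : ℝ, 0 < ε → dist x y ≤ K * R ^ (t.toReal - ε) := by
      intro ε hε
      have hex : ∃ m, t.toReal - ε ≤ MoranPaper.gromovD G [] (u m) (v m) := by
        by_cases hbot : t = ⊥
        · refine ⟨0, ?_⟩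
          have h00 : MoranPaper.gromovD G [] (u 0) (v 0) = 0 := by
            simp [MoranPaper.gromovD, MoranPaper.ray_zero hu, MoranPaper.ray_zero hv]
          rw [hbot, h00]
          simp [EReal.toReal_bot]
          linarith
        · have hteq : ((t.toReal : ℝ) : EReal) = t := EReal.coe_toReal ht hbot
          have hlt : ((t.toReal - ε : ℝ) : EReal) < Filter.liminf
              (fun m => ((MoranPaper.gromovD G [] (u m) (v m) : ℝ) : EReal)) Filter.atTop := by
            have h2 : ((t.toReal - ε : ℝ) : EReal) < t := by
              rw [← hteq]
              exact_mod_cast (by linarith : t.toReal - ε < t.toReal)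
            exact h2
          obtain ⟨m, hm⟩ := (Filter.eventually_lt_of_lt_liminf hlt).exists
          exact ⟨m, by exact_mod_cast hm.le⟩
      obtain ⟨m, hm⟩ := hex
      calc dist x y ≤ K * R ^ (MoranPaper.gromovD G [] (u m) (v m)) := key m
        _ ≤ K * R ^ (t.toReal - ε) := mul_le_mul_of_nonneg_left
            (Real.rpow_le_rpow_of_exponent_ge hR0 hR1.le hm) hK0.le
    have htend : Filter.Tendsto (fun j : ℕ => K * R ^ (t.toReal - 1/((j:ℝ)+1)))
        Filter.atTop (nhds (K * R ^ t.toReal)) := by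
      have h1 : Filter.Tendsto (fun j : ℕ => t.toReal - 1/((j:ℝ)+1))
          Filter.atTop (nhds t.toReal) := by
        have h4 := tendsto_one_div_add_atTop_nhds_zero_nat (𝕜 := ℝ)
        simpa using (tendsto_const_nhds (x := t.toReal) (f := Filter.atTop)).sub h4
      have h2 : ContinuousAt (fun z : ℝ => R ^ z) t.toReal :=
        Real.continuousAt_const_rpow hR0.ne'
      exact (h2.tendsto.comp h1).const_mul K
    refine ge_of_tendsto' htend fun j => ?_
    exact hge _ (by positivity)
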